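/- For every a, b, c ∈ ℕ and every choice of signs ι₁, ι₂ ∈ {+1, −1} there exist constants κ > 0 and C > 0 such that for all η, σ, p ∈ ℝ with |p| ≤ κ / R(η,σ), the iterated partial derivative ∂_η^a ∂_σ^b ∂_p^c of the function (η,σ,p) ↦ 1/Φ_{ι₁ι₂}(p+η+σ, η, σ) satisfies |∂_η^a ∂_σ^b ∂_p^c [1/Φ_{ι₁ι₂}(p+η+σ, η, σ)]| ≤ C · (min(⟨p+η+σ⟩, ⟨η⟩, ⟨σ⟩))^{1+c}. -/

import Mathlib

/-- The Japanese bracket `⟨x⟩ = √(1 + x²)`. -/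
noncomputable def jb (x : ℝ) : ℝ := Real.sqrt (1 + x ^ 2)

/-- The quadratic Klein–Gordon phase `Φ_{ι₁ι₂}(ξ,η,σ) = ⟨ξ⟩ − ι₁⟨η⟩ − ι₂⟨σ⟩`. -/
noncomputable def Phi (ι₁ ι₂ : ℝ) (ξ η σ : ℝ) : ℝ := jb ξ - ι₁ * jb η - ι₂ * jb σ

/-- `R(η,σ) = ⟨η⟩⟨σ⟩/(⟨η⟩+⟨σ⟩)`, comparable to `min(⟨η⟩,⟨σ⟩)`. -/
noncomputable def Rf (η σ : ℝ) : ℝ := jb η * jb σ / (jb η + jb σ)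

/-- The iterated partial derivative `∂_η^a ∂_σ^b ∂_p^c` of
`(η,σ,p) ↦ 1/Φ_{ι₁ι₂}(p+η+σ, η, σ)`, taken one variable at a time. -/
noncomputable def DrecPhi (ι₁ ι₂ : ℝ) (a b c : ℕ) (η σ p : ℝ) : ℝ :=
  iteratedDeriv a (fun η' =>
    iteratedDeriv b (fun σ' =>
      iteratedDeriv c (fun p' => (Phi ι₁ ι₂ (p' + η' + σ') η' σ')⁻¹) p) σ) η

lemma jb_sq (x : ℝ) : jb x ^ 2 = 1 + x ^ 2 := by
  have : (0:ℝ) ≤ 1 + x ^ 2 := by positivity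
  simp [jb, Real.sq_sqrt this]

lemma one_le_jb (x : ℝ) : 1 ≤ jb x := by
  have : (1:ℝ) = Real.sqrt 1 := by simp
  rw [jb, this]
  exact Real.sqrt_le_sqrt (by nlinarith)

lemma jb_pos (x : ℝ) : 0 < jb x := lt_of_lt_of_le one_pos (one_le_jb x)

lemma jb_nonneg (x : ℝ) : 0 ≤ jb x := (jb_pos x).le

lemma abs_le_jb (x : ℝ) : |x| ≤ jb x := by
  have h := jb_sq x
  nlinarith [jb_pos x, sq_abs x, abs_nonneg x]

lemma jb_even (x : ℝ) : jb (-x) = jb x := by simp [jb]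

lemma jb_mono {x y : ℝ} (h : |x| ≤ |y|) : jb x ≤ jb y := by
  apply Real.sqrt_le_sqrt
  nlinarith [sq_abs x, sq_abs y, abs_nonneg x]

lemma jb_lip (x y : ℝ) : |jb x - jb y| ≤ |x - y| := by
  have hx := jb_sq x; have hy := jb_sq y
  have h1 : (jb x - jb y) * (jb x + jb y) = (x-y)*(x+y) := by nlinarith
  rcases abs_cases (x - y) with ⟨h, _⟩ | ⟨h, _⟩ <;>
  rcases abs_cases (jb x - jb y) with ⟨h2, _⟩ | ⟨h2, _⟩ <;>
  nlinarith [jb_pos x, jb_pos y, abs_le_jb x, abs_le_jb y, abs_nonneg (x-y),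
    neg_abs_le x, le_abs_self x, neg_abs_le y, le_abs_self y]

lemma key_aux (a b u v w : ℝ) (hu : u^2 = 1+a^2) (hv : v^2 = 1+b^2)
    (hw : w^2 = 1+(a+b)^2) (hu1 : 1 ≤ u) (hv1 : 1 ≤ v) (hw1 : 1 ≤ w) :
    1 / (4 * min w (min u v)) ≤ u + v - w := by
  have h1 : 1 + a^2 + b^2 ≤ 2*(u*v)*(u*v - a*b) := by
    nlinarith [sq_nonneg (u*v - a*b)]
  have hsum : (u + v)^2 - w^2 = 1 + 2*(u*v - a*b) := by
    rw [add_sq]; rw [hu, hv, hw]; ring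
  have hM : max u v ^ 2 ≤ 1 + a^2 + b^2 := by
    rcases max_cases u v with ⟨h, _⟩ | ⟨h, _⟩ <;> rw [h] <;> nlinarith
  have huv : (0:ℝ) < u * v := by nlinarith
  have hM1 : (1:ℝ) ≤ max u v := le_trans hu1 (le_max_left u v)
  have h2 : max u v ^ 2 ≤ ((u+v)^2 - w^2) * (u*v) := by
    nlinarith [hsum]
  have hwlt : w < u + v := by
    by_contra hcon
    push_neg at hcon
    have hWW : (u+v)^2 ≤ w^2 := by nlinarith
    have : ((u+v)^2 - w^2) * (u*v) ≤ 0 :=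
      mul_nonpos_of_nonpos_of_nonneg (by linarith) huv.le
    nlinarith
  have hsum4 : u + v + w ≤ 4 * max u v := by
    rcases max_cases u v with ⟨h, h'⟩ | ⟨h, h'⟩ <;> nlinarith
  have hmin_pos : (0:ℝ) < min u v := lt_of_lt_of_le one_pos (le_min hu1 hv1)
  have hmm : min u v * max u v = u * v := min_mul_max u v
  have hMpos : (0:ℝ) < max u v := lt_of_lt_of_le hmin_pos min_le_max
  have hcore : 1 / (4 * min u v) ≤ u + v - w := by
    rw [div_le_iff₀ (by positivity)]
    have hpos : 0 < u + v - w := by linarith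
    have e1 : (u+v-w)*(u+v+w) = (u+v)^2 - w^2 := by ring
    have h3 : max u v ^2 ≤ (u+v-w)*(u+v+w)*(min u v * max u v) := by
      rw [e1, hmm]; exact h2
    have h4 : (u+v-w)*(u+v+w)*(min u v*max u v) ≤ ((u+v-w)*(4*max u v))*(min u v*max u v) := by
      have h4a := mul_le_mul_of_nonneg_left hsum4 hpos.le
      exact mul_le_mul_of_nonneg_right h4a (by positivity)
    have h5 : max u v^2 ≤ ((u+v-w)*(4*min u v))*max u v^2 :=
      le_trans h3 (le_of_le_of_eq h4 (by ring))
    nlinarith [h5, mul_pos hMpos hMpos]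
  rcases le_or_gt (min u v) w with hcase | hcase
  · rw [min_eq_right hcase]; exact hcore
  · rw [min_eq_left hcase.le]
    have h6 : 1 / (4*w) ≤ 1 := by
      rw [div_le_one (by positivity)]; linarith
    have hw_v : w ≤ v := le_trans hcase.le (min_le_right u v)
    have hmax : 1 ≤ u + v - w := by linarith
    linarith

lemma key_lower (a b : ℝ) :
    1 / (4 * min (jb (a+b)) (min (jb a) (jb b))) ≤ jb a + jb b - jb (a+b) :=
  key_aux a b _ _ _ (jb_sq a) (jb_sq b) (jb_sq (a+b)) (one_le_jb a) (one_le_jb b)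
    (one_le_jb (a+b))

lemma jb_add_le (a b : ℝ) : jb (a+b) ≤ jb a + jb b := by
  have h := key_lower a b
  have : 0 < 1 / (4 * min (jb (a+b)) (min (jb a) (jb b))) := by
    have := jb_pos (a+b); have := jb_pos a; have := jb_pos b
    positivity
  linarith

lemma hasDerivAt_jb (x : ℝ) : HasDerivAt jb (x * jb x / (1 + x^2)) x := by
  have h : (0:ℝ) < 1 + x^2 := by positivity
  have h1 : HasDerivAt (fun y : ℝ => 1 + y^2) (2*x) x := by
    simpa using (hasDerivAt_pow 2 x).const_add 1
  have h2 := (Real.hasDerivAt_sqrt h.ne').comp x h1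
  refine h2.congr_deriv ?_; symm
  have hj : Real.sqrt (1 + x^2) = jb x := rfl
  have hsq := jb_sq x
  rw [hj]
  have hne : jb x ≠ 0 := (jb_pos x).ne'
  field_simp
  linear_combination x*hsq

open Polynomial in
lemma deriv_form (P : Polynomial ℝ) (k : ℕ) (x : ℝ) :
    HasDerivAt (fun y => P.eval y * jb y / (1+y^2)^(k+1))
      ((P.derivative*(C 1+X^2) - C (2*(k:ℝ)+1)*X*P).eval x * jb x / (1+x^2)^(k+2)) x := by
  have ht : (0:ℝ) < 1 + x^2 := by positivity
  have h1 : HasDerivAt (fun y : ℝ => P.eval y * jb y) (P.derivative.eval x * jb x + P.eval x * (x * jb x / (1+x^2))) x :=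
    (P.hasDerivAt x).mul (hasDerivAt_jb x)
  have h2 : HasDerivAt (fun y : ℝ => (1+y^2)^(k+1)) ((k+1 : ℕ) * (1+x^2)^k * (2*x)) x := by
    have hb : HasDerivAt (fun y : ℝ => 1 + y^2) (2*x) x := by
      simpa using (hasDerivAt_pow 2 x).const_add 1
    exact (hb.pow (k+1)).congr_deriv (by simp)
  have h3 := h1.div h2 (by positivity)
  refine h3.congr_deriv ?_; symm
  have hsq := jb_sq x
  simp only [eval_sub, eval_mul, eval_add, eval_C, eval_X, eval_pow]
  field_simp
  push_cast
  ring

open Polynomial in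
lemma jb_rep : ∀ k : ℕ, ∃ P : Polynomial ℝ, P.natDegree ≤ k+1 ∧
    ∀ x, iteratedDeriv (k+1) jb x = P.eval x * jb x / (1+x^2)^(k+1) := by
  intro k
  induction k with
  | zero =>
    refine ⟨X, by simp, fun x => ?_⟩
    rw [iteratedDeriv_one]
    rw [(hasDerivAt_jb x).deriv]
    simp
  | succ k ih =>
    obtain ⟨P, hdeg, hP⟩ := ih
    refine ⟨P.derivative*(C 1+X^2) - C (2*(k:ℝ)+1)*X*P, ?_, fun x => ?_⟩
    · apply le_trans (natDegree_sub_le _ _)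
      apply max_le
      · apply le_trans (natDegree_mul_le)
        have h1 : (Polynomial.derivative P).natDegree ≤ k := by
          apply le_trans (natDegree_derivative_le P)
          omega
        have h2 : (C (1:ℝ)+X^2).natDegree ≤ 2 := by
          apply le_trans (natDegree_add_le _ _)
          simp only [natDegree_C, natDegree_X_pow]
          omega
        omega
      · apply le_trans (natDegree_mul_le)
        have h1 : (C (2*(k:ℝ)+1)*X).natDegree ≤ 1 := by
          apply le_trans (natDegree_mul_le)
          simp only [natDegree_C, natDegree_X]
          omega
        omega
    · rw [iteratedDeriv_succ]
      have hfe : iteratedDeriv (k+1) jb = fun y => P.eval y * jb y / (1+y^2)^(k+1) :=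
        funext hP
      rw [hfe, (deriv_form P k x).deriv]

lemma hasDerivAt_iteratedDeriv_jb (n : ℕ) (x : ℝ) :
    HasDerivAt (iteratedDeriv n jb) (iteratedDeriv (n+1) jb x) x := by
  cases n with
  | zero =>
    simp only [iteratedDeriv_zero]
    have h := hasDerivAt_jb x
    have : iteratedDeriv 1 jb x = x * jb x / (1+x^2) := by
      rw [iteratedDeriv_one, h.deriv]
    rw [this]; exact h
  | succ k =>
    obtain ⟨P, hdeg, hP⟩ := jb_rep k
    have hfe : iteratedDeriv (k+1) jb = fun y => P.eval y * jb y / (1+y^2)^(k+1) :=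
      funext hP
    have hd := deriv_form P k x
    have hval : iteratedDeriv (k+1+1) jb x = Polynomial.eval x
        (Polynomial.derivative P * (Polynomial.C 1 + Polynomial.X ^ 2) -
          Polynomial.C (2 * (k:ℝ) + 1) * Polynomial.X * P) * jb x / (1+x^2)^(k+2) := by
      rw [iteratedDeriv_succ, hfe]
      exact hd.deriv
    rw [hfe, hval]
    exact hd

lemma poly_eval_bound (P : Polynomial ℝ) (d : ℕ) (hd : P.natDegree ≤ d) :
    ∃ C : ℝ, 0 < C ∧ ∀ x, |P.eval x| ≤ C * jb x ^ d := by
  classical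
  refine ⟨(∑ i ∈ Finset.range (P.natDegree+1), |P.coeff i|) + 1, by positivity, fun x => ?_⟩
  rw [Polynomial.eval_eq_sum_range]
  have hjb1 := one_le_jb x
  calc |∑ i ∈ Finset.range (P.natDegree+1), P.coeff i * x ^ i|
      ≤ ∑ i ∈ Finset.range (P.natDegree+1), |P.coeff i * x ^ i| :=
        Finset.abs_sum_le_sum_abs _ _
    _ ≤ ∑ i ∈ Finset.range (P.natDegree+1), |P.coeff i| * jb x ^ d := by
        apply Finset.sum_le_sum
        intro i hi
        rw [abs_mul, abs_pow]
        apply mul_le_mul_of_nonneg_left _ (abs_nonneg _)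
        calc |x| ^ i ≤ jb x ^ i := by
              apply pow_le_pow_left₀ (abs_nonneg x)
              · have := jb_sq x
                nlinarith [jb_pos x, sq_abs x]
          _ ≤ jb x ^ d := by
              apply pow_le_pow_right₀ hjb1
              have : i < P.natDegree + 1 := Finset.mem_range.mp hi
              omega
    _ = (∑ i ∈ Finset.range (P.natDegree+1), |P.coeff i|) * jb x ^ d := by
        rw [Finset.sum_mul]
    _ ≤ ((∑ i ∈ Finset.range (P.natDegree+1), |P.coeff i|) + 1) * jb x ^ d := by
        have : (0:ℝ) ≤ jb x ^ d := by positivity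
        nlinarith

lemma jb_iter_bound (k : ℕ) : ∃ C : ℝ, 0 < C ∧
    ∀ x, |iteratedDeriv (k+1) jb x| ≤ C / jb x ^ k := by
  obtain ⟨P, hdeg, hP⟩ := jb_rep k
  obtain ⟨C, hC, hB⟩ := poly_eval_bound P (k+1) hdeg
  refine ⟨C, hC, fun x => ?_⟩
  rw [hP x]
  have hjpos := jb_pos x
  have hjb1 := one_le_jb x
  have ht : (1+x^2)^(k+1) = jb x ^ (2*k+2) := by
    rw [← jb_sq, ← pow_mul]
    ring_nf
  rw [ht, abs_div, abs_mul, abs_pow]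
  rw [abs_of_pos hjpos]
  rw [div_le_div_iff₀ (by positivity) (by positivity)]
  calc |P.eval x| * jb x * jb x ^ k ≤ (C * jb x ^ (k+1)) * jb x * jb x ^ k := by
        have := hB x
        have h0 : (0:ℝ) ≤ jb x * jb x ^ k := by positivity
        nlinarith [pow_pos hjpos (k+1)]
    _ = C * jb x ^ (2*k+2) := by ring

noncomputable def dP (ι₁ ι₂ : ℝ) (α : ℕ × ℕ × ℕ) (η σ p : ℝ) : ℝ :=
  iteratedDeriv (α.1 + α.2.1 + α.2.2) jb (p + η + σ)
    - (if α.2.1 = 0 ∧ α.2.2 = 0 then ι₁ * iteratedDeriv α.1 jb η else 0)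
    - (if α.1 = 0 ∧ α.2.2 = 0 then ι₂ * iteratedDeriv α.2.1 jb σ else 0)

lemma dP_zero (ι₁ ι₂ η σ p : ℝ) : dP ι₁ ι₂ (0,0,0) η σ p = Phi ι₁ ι₂ (p+η+σ) η σ := by
  simp [dP, Phi]

lemma hasDerivAt_dP_eta (ι₁ ι₂ : ℝ) (a b c : ℕ) (η σ p : ℝ) :
    HasDerivAt (fun t => dP ι₁ ι₂ (a,b,c) t σ p) (dP ι₁ ι₂ (a+1, b, c) η σ p) η := by
  have hg : HasDerivAt (fun t : ℝ => p + t + σ) 1 η := by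
    simpa using ((hasDerivAt_id η).const_add p).add_const σ
  have h1 : HasDerivAt (fun t => iteratedDeriv (a+b+c) jb (p+t+σ))
      (iteratedDeriv (a+b+c+1) jb (p+η+σ)) η := by
    exact ((hasDerivAt_iteratedDeriv_jb (a+b+c) (p+η+σ)).comp η hg).congr_deriv (mul_one _)
  have h2 : HasDerivAt (fun t => if b=0∧c=0 then ι₁ * iteratedDeriv a jb t else 0)
      (if b=0∧c=0 then ι₁ * iteratedDeriv (a+1) jb η else 0) η := by
    by_cases h : b=0∧c=0
    · simp only [if_pos h]; exact (hasDerivAt_iteratedDeriv_jb a η).const_mul ι₁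
    · simp only [if_neg h]; exact hasDerivAt_const η 0
  have h3 := (h1.sub h2).sub_const (if a=0∧c=0 then ι₂ * iteratedDeriv b jb σ else 0)
  have he : a+1+b+c = a+b+c+1 := by omega
  simp only [dP, he, if_neg (show ¬(a+1=0∧c=0) by omega)]
  refine h3.congr_deriv ?_; symm
  ring

lemma hasDerivAt_dP_sigma (ι₁ ι₂ : ℝ) (a b c : ℕ) (η σ p : ℝ) :
    HasDerivAt (fun t => dP ι₁ ι₂ (a,b,c) η t p) (dP ι₁ ι₂ (a, b+1, c) η σ p) σ := by
  have hg : HasDerivAt (fun t : ℝ => p + η + t) 1 σ := by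
    simpa using (hasDerivAt_id σ).const_add (p + η)
  have h1 : HasDerivAt (fun t => iteratedDeriv (a+b+c) jb (p+η+t))
      (iteratedDeriv (a+b+c+1) jb (p+η+σ)) σ := by
    exact ((hasDerivAt_iteratedDeriv_jb (a+b+c) (p+η+σ)).comp σ hg).congr_deriv (mul_one _)
  have h2 : HasDerivAt (fun t => if a=0∧c=0 then ι₂ * iteratedDeriv b jb t else 0)
      (if a=0∧c=0 then ι₂ * iteratedDeriv (b+1) jb σ else 0) σ := by
    by_cases h : a=0∧c=0
    · simp only [if_pos h]; exact (hasDerivAt_iteratedDeriv_jb b σ).const_mul ι₂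
    · simp only [if_neg h]; exact hasDerivAt_const σ 0
  have h3 := ((h1.sub_const (if b=0∧c=0 then ι₁ * iteratedDeriv a jb η else 0)).sub h2)
  have he : a+(b+1)+c = a+b+c+1 := by omega
  simp only [dP, he, if_neg (show ¬(b+1=0∧c=0) by omega)]
  refine h3.congr_deriv ?_; symm
  ring

lemma hasDerivAt_dP_p (ι₁ ι₂ : ℝ) (a b c : ℕ) (η σ p : ℝ) :
    HasDerivAt (fun t => dP ι₁ ι₂ (a,b,c) η σ t) (dP ι₁ ι₂ (a, b, c+1) η σ p) p := by
  have hg : HasDerivAt (fun t : ℝ => t + η + σ) 1 p := by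
    simpa using ((hasDerivAt_id p).add_const η).add_const σ
  have h1 : HasDerivAt (fun t => iteratedDeriv (a+b+c) jb (t+η+σ))
      (iteratedDeriv (a+b+c+1) jb (p+η+σ)) p := by
    exact ((hasDerivAt_iteratedDeriv_jb (a+b+c) (p+η+σ)).comp p hg).congr_deriv (mul_one _)
  have h3 := (h1.sub_const (if b=0∧c=0 then ι₁ * iteratedDeriv a jb η else 0)).sub_const
    (if a=0∧c=0 then ι₂ * iteratedDeriv b jb σ else 0)
  have he : a+b+(c+1) = a+b+c+1 := by omega
  simp only [dP, he, if_neg (show ¬(b=0∧c+1=0) by omega),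
    if_neg (show ¬(a=0∧c+1=0) by omega)]
  refine h3.congr_deriv ?_; symm
  ring

noncomputable def mm (η σ p : ℝ) : ℝ := min (jb (p+η+σ)) (min (jb η) (jb σ))

def InO (η σ p : ℝ) : Prop := |p| * Rf η σ < 1/16

lemma one_le_mm (η σ p : ℝ) : 1 ≤ mm η σ p :=
  le_min (one_le_jb _) (le_min (one_le_jb _) (one_le_jb _))

lemma mm_pos (η σ p : ℝ) : 0 < mm η σ p := lt_of_lt_of_le one_pos (one_le_mm η σ p)

lemma Rf_lower (η σ : ℝ) : min (jb η) (jb σ) ≤ 2 * Rf η σ := by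
  have hu := jb_pos η; have hv := jb_pos σ
  have hu1 := one_le_jb η; have hv1 := one_le_jb σ
  rw [Rf, show 2 * (jb η * jb σ / (jb η + jb σ)) = 2 * (jb η * jb σ) / (jb η + jb σ) from by ring,
    le_div_iff₀ (by positivity)]
  rcases min_cases (jb η) (jb σ) with ⟨h,h'⟩|⟨h,h'⟩ <;> rw [h] <;> nlinarith

lemma InO_p_min {η σ p : ℝ} (h : InO η σ p) : |p| * min (jb η) (jb σ) < 1/8 := by
  have h2 := Rf_lower η σ
  have h3 : |p| * min (jb η) (jb σ) ≤ |p| * (2 * Rf η σ) :=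
    mul_le_mul_of_nonneg_left h2 (abs_nonneg p)
  have := h
  rw [InO] at this
  nlinarith [abs_nonneg p]

lemma InO_p {η σ p : ℝ} (h : InO η σ p) : |p| < 1/8 := by
  have h1 := InO_p_min h
  have h2 : 1 ≤ min (jb η) (jb σ) := le_min (one_le_jb η) (one_le_jb σ)
  nlinarith [abs_nonneg p]

lemma phi_lower {ι₁ ι₂ : ℝ} (h₁ : ι₁ = 1 ∨ ι₁ = -1) (h₂ : ι₂ = 1 ∨ ι₂ = -1)
    {η σ p : ℝ} (h : InO η σ p) :
    1 / (9 * mm η σ p) ≤ |Phi ι₁ ι₂ (p+η+σ) η σ| := by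
  have hm0 : (1:ℝ) ≤ min (jb (η+σ)) (min (jb η) (jb σ)) :=
    le_min (one_le_jb _) (le_min (one_le_jb _) (one_le_jb _))
  set m0 := min (jb (η+σ)) (min (jb η) (jb σ)) with hm0d
  have hm0pos : (0:ℝ) < m0 := lt_of_lt_of_le one_pos hm0
  -- step 1 : lower bound for the unperturbed phase
  have step1 : 1/(4*m0) ≤ |jb (η+σ) - ι₁ * jb η - ι₂ * jb σ| := by
    rcases h₁ with h₁ | h₁ <;> rcases h₂ with h₂ | h₂ <;> subst h₁ <;> subst h₂
    · have hk := key_lower η σ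
      refine le_trans (le_trans hk ?_) (neg_le_abs _)
      apply le_of_eq; ring
    · have hk := key_lower (η+σ) (-σ)
      rw [show η+σ+-σ = η from by ring, jb_even, min_left_comm] at hk
      refine le_trans (le_trans hk ?_) (le_abs_self _)
      apply le_of_eq; ring
    · have hk := key_lower (η+σ) (-η)
      rw [show η+σ+-η = σ from by ring, jb_even] at hk
      rw [min_left_comm, min_comm (jb σ) (jb η)] at hk
      refine le_trans (le_trans hk ?_) (le_abs_self _)
      apply le_of_eq; ring
    · have h3 : (3:ℝ) ≤ jb (η+σ) - (-1) * jb η - (-1) * jb σ := by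
        have := one_le_jb (η+σ); have := one_le_jb η; have := one_le_jb σ
        linarith
      refine le_trans ?_ (le_trans h3 (le_abs_self _))
      rw [div_le_iff₀ (by positivity)]
      nlinarith
  -- step 2 : perturbation
  have step2 : |Phi ι₁ ι₂ (p+η+σ) η σ - (jb (η+σ) - ι₁ * jb η - ι₂ * jb σ)| ≤ |p| := by
    rw [Phi, show jb (p+η+σ) - ι₁ * jb η - ι₂ * jb σ - (jb (η+σ) - ι₁ * jb η - ι₂ * jb σ)
      = jb (p+η+σ) - jb (η+σ) from by ring]
    refine le_trans (jb_lip _ _) (le_of_eq ?_)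
    rw [show p+η+σ - (η+σ) = p from by ring]
  -- step 3 : |p| small compared to 1/m0
  have step3 : |p| * m0 < 1/8 := by
    have h1 := InO_p_min h
    have h2 : m0 ≤ min (jb η) (jb σ) := min_le_right _ _
    nlinarith [abs_nonneg p]
  have step3' : |p| ≤ 1/(8*m0) := by
    rw [le_div_iff₀ (by positivity)]
    nlinarith
  -- combine
  have step2' : |(jb (η+σ) - ι₁ * jb η - ι₂ * jb σ) - Phi ι₁ ι₂ (p+η+σ) η σ| ≤ |p| := by
    rw [show (jb (η+σ) - ι₁ * jb η - ι₂ * jb σ) - Phi ι₁ ι₂ (p+η+σ) η σ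
      = jb (η+σ) - jb (p+η+σ) from by rw [Phi]; ring]
    refine le_trans (jb_lip _ _) (le_of_eq ?_)
    rw [show η+σ - (p+η+σ) = -p from by ring, abs_neg]
  have habs := (abs_sub_abs_le_abs_sub (jb (η+σ) - ι₁ * jb η - ι₂ * jb σ)
    (Phi ι₁ ι₂ (p+η+σ) η σ)).trans step2'
  have e48 : 1/(4*m0) - 1/(8*m0) = 1/(8*m0) := by
    field_simp; ring
  have hcomb : 1/(8*m0) ≤ |Phi ι₁ ι₂ (p+η+σ) η σ| := by linarith
  refine le_trans ?_ hcomb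
  have hp8 : |p| ≤ 1/8 := (InO_p h).le
  have hxi : jb (η+σ) ≤ (9/8) * jb (p+η+σ) := by
    have hl := jb_lip (η+σ) (p+η+σ)
    rw [show η+σ-(p+η+σ) = -p from by ring, abs_neg] at hl
    have h1 := one_le_jb (p+η+σ)
    have h2 : jb (η+σ) - jb (p+η+σ) ≤ |p| := (le_abs_self _).trans hl
    linarith
  have hmm1 : (1:ℝ) ≤ mm η σ p := one_le_mm η σ p
  have hcmp : m0 ≤ (9/8) * mm η σ p := by
    rcases min_cases (jb (p+η+σ)) (min (jb η) (jb σ)) with ⟨hq, hq'⟩|⟨hq,hq'⟩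
    · rw [mm, hq]
      exact le_trans (min_le_left _ _) hxi
    · rw [mm, hq]
      have := min_le_right (jb (η+σ)) (min (jb η) (jb σ))
      have h0 : (1:ℝ) ≤ min (jb η) (jb σ) := le_min (one_le_jb _) (one_le_jb _)
      rw [hm0d]
      linarith
  rw [div_le_div_iff₀ (by positivity) (by positivity)]
  nlinarith


lemma iter1_jb (x : ℝ) : iteratedDeriv 1 jb x = x / jb x := by
  rw [iteratedDeriv_one, (hasDerivAt_jb x).deriv]
  rw [div_eq_div_iff (by positivity) (jb_pos x).ne']
  linear_combination x * jb_sq x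

lemma aligned_diff {x y : ℝ} (hxy : 0 ≤ x*y) :
    |x/jb x - y/jb y| ≤ 2 / min (jb x) (jb y) := by
  have h1 : x*y ≤ jb x * jb y := by
    calc x*y ≤ |x * y| := le_abs_self _
      _ = |x| * |y| := abs_mul x y
      _ ≤ jb x * jb y :=
        mul_le_mul (abs_le_jb x) (abs_le_jb y) (abs_nonneg y) (jb_pos x).le
  have hD2 : (x * jb y - y * jb x)^2 ≤ x^2 + y^2 := by
    nlinarith [jb_sq x, jb_sq y, mul_nonneg hxy (sub_nonneg.mpr h1)]
  have habs : |x*jb y - y*jb x| ≤ 2 * max (jb x) (jb y) := by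
    nlinarith [sq_abs (x*jb y - y*jb x), abs_nonneg (x*jb y - y*jb x),
      le_max_left (jb x) (jb y), le_max_right (jb x) (jb y), jb_sq x, jb_sq y,
      jb_pos x, jb_pos y]
  have e : x/jb x - y/jb y = (x*jb y - y*jb x)/(jb x * jb y) := by
    field_simp [(jb_pos x).ne', (jb_pos y).ne']
  have hminpos : 0 < min (jb x) (jb y) := lt_min (jb_pos x) (jb_pos y)
  rw [e, abs_div, abs_mul, abs_of_pos (jb_pos x), abs_of_pos (jb_pos y),
    div_le_div_iff₀ (mul_pos (jb_pos x) (jb_pos y)) hminpos]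
  calc |x*jb y - y*jb x| * min (jb x) (jb y)
      ≤ (2 * max (jb x) (jb y)) * min (jb x) (jb y) :=
        mul_le_mul_of_nonneg_right habs hminpos.le
    _ = 2 * (jb x * jb y) := by
        rw [mul_assoc, mul_comm (max _ _) (min _ _), min_mul_max]

lemma misaligned_phase {ι₁ ι₂ : ℝ} (h₁ : ι₁ = 1 ∨ ι₁ = -1) (h₂ : ι₂ = 1 ∨ ι₂ = -1)
    {η σ p : ℝ} (hp : |p| ≤ 1/8) (hmis : ι₁ * ((p+η+σ) * η) < 0) :
    7/8 ≤ |Phi ι₁ ι₂ (p+η+σ) η σ| := by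
  have hlip : |jb σ - jb (p+η+σ-η)| ≤ |p| := by
    refine le_trans (jb_lip _ _) (le_of_eq ?_)
    rw [show σ - (p+η+σ-η) = -p from by ring, abs_neg]
  have h1ξ := one_le_jb (p+η+σ); have h1η := one_le_jb η; have h1σ := one_le_jb σ
  rcases h₁ with h₁ | h₁ <;> subst h₁
  · -- ι₁ = 1, opposite signs
    rw [one_mul] at hmis
    have hge_xi : jb (p+η+σ) ≤ jb (p+η+σ-η) := by
      apply jb_mono
      rw [← Real.sqrt_sq_eq_abs, ← Real.sqrt_sq_eq_abs]
      exact Real.sqrt_le_sqrt (by nlinarith)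
    have hge_eta : jb η ≤ jb (p+η+σ-η) := by
      apply jb_mono
      rw [← Real.sqrt_sq_eq_abs, ← Real.sqrt_sq_eq_abs]
      exact Real.sqrt_le_sqrt (by nlinarith)
    have hσlow : jb (p+η+σ-η) - |p| ≤ jb σ := by
      have := neg_abs_le (jb σ - jb (p+η+σ-η))
      linarith [abs_sub_comm (jb σ) (jb (p+η+σ-η)) ▸ hlip]
    rcases h₂ with h₂ | h₂ <;> subst h₂
    · refine le_trans ?_ (neg_le_abs _)
      rw [Phi]; linarith
    · refine le_trans ?_ (le_abs_self _)
      rw [Phi]; linarith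
  · -- ι₁ = -1, same signs
    have hpos' : 0 < (p+η+σ) * η := by nlinarith
    have hs : jb (p+η+σ-η) ≤ max (jb (p+η+σ)) (jb η) := by
      rcases mul_pos_iff.mp hpos' with ⟨hx,hy⟩|⟨hx,hy⟩ <;>
        rcases le_total (p+η+σ) η with hle|hle
      · refine le_trans (jb_mono ?_) (le_max_right _ _)
        rw [abs_of_nonpos (by linarith), abs_of_pos hy]; linarith
      · refine le_trans (jb_mono ?_) (le_max_left _ _)
        rw [abs_of_nonneg (by linarith), abs_of_pos hx]; linarith
      · refine le_trans (jb_mono ?_) (le_max_left _ _)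
        rw [abs_of_nonpos (by linarith), abs_of_neg hx]; linarith
      · refine le_trans (jb_mono ?_) (le_max_right _ _)
        rw [abs_of_nonneg (by linarith), abs_of_neg hy]; linarith
    have hσhigh : jb σ ≤ jb (p+η+σ-η) + |p| := by
      have := le_abs_self (jb σ - jb (p+η+σ-η))
      linarith
    rcases h₂ with h₂ | h₂ <;> subst h₂
    · refine le_trans ?_ (le_abs_self _)
      rw [Phi]
      rcases max_cases (jb (p+η+σ)) (jb η) with ⟨hm,_⟩|⟨hm,_⟩ <;> rw [hm] at hs <;> linarith
    · refine le_trans ?_ (le_abs_self _)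
      rw [Phi]; linarith


-- helpers
lemma mm_le_xi (η σ p : ℝ) : mm η σ p ≤ jb (p+η+σ) := min_le_left _ _
lemma mm_le_eta (η σ p : ℝ) : mm η σ p ≤ jb η :=
  le_trans (min_le_right _ _) (min_le_left _ _)
lemma mm_le_sigma (η σ p : ℝ) : mm η σ p ≤ jb σ :=
  le_trans (min_le_right _ _) (min_le_right _ _)

lemma inv_mm_le_phi {ι₁ ι₂ : ℝ} (h₁ : ι₁ = 1 ∨ ι₁ = -1) (h₂ : ι₂ = 1 ∨ ι₂ = -1)
    {η σ p : ℝ} (h : InO η σ p) :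
    1 / mm η σ p ≤ 9 * |Phi ι₁ ι₂ (p+η+σ) η σ| := by
  have h0 := phi_lower h₁ h₂ h
  have hmp := mm_pos η σ p
  rw [div_le_iff₀ (mul_pos (by norm_num : (0:ℝ) < 9) hmp)] at h0
  rw [div_le_iff₀ hmp]
  nlinarith

lemma fo_eta {ι₁ ι₂ : ℝ} (h₁ : ι₁ = 1 ∨ ι₁ = -1) (h₂ : ι₂ = 1 ∨ ι₂ = -1)
    {η σ p : ℝ} (h : InO η σ p) :
    |dP ι₁ ι₂ (1,0,0) η σ p| ≤ 18 * |dP ι₁ ι₂ (0,0,0) η σ p| := by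
  rw [dP_zero]
  have hval : dP ι₁ ι₂ (1,0,0) η σ p = (p+η+σ)/jb (p+η+σ) - ι₁ * (η / jb η) := by
    simp [dP, iter1_jb]
  rw [hval]
  have hPhi := phi_lower h₁ h₂ h
  have hmm1 := one_le_mm η σ p
  have hmp := mm_pos η σ p
  rcases le_or_gt 0 (ι₁ * ((p+η+σ) * η)) with hal | hmis
  · have hminpos : (0:ℝ) < min (jb (p+η+σ)) (jb η) := lt_min (jb_pos _) (jb_pos _)
    have hmin : mm η σ p ≤ min (jb (p+η+σ)) (jb η) :=
      le_min (mm_le_xi η σ p) (mm_le_eta η σ p)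
    have hcore : |(p+η+σ)/jb (p+η+σ) - ι₁ * (η/jb η)| ≤ 2 / min (jb (p+η+σ)) (jb η) := by
      rcases h₁ with h'|h' <;> subst h'
      · rw [one_mul]
        exact aligned_diff (by nlinarith)
      · have hcl := aligned_diff (x := p+η+σ) (y := -η) (by nlinarith)
        rw [jb_even] at hcl
        rw [show (p+η+σ)/jb (p+η+σ) - (-1) * (η/jb η)
          = (p+η+σ)/jb (p+η+σ) - (-η)/jb η from by ring]
        exact hcl
    have h2 : 2 / min (jb (p+η+σ)) (jb η) ≤ 2 / mm η σ p := by
      apply div_le_div_of_nonneg_left (by norm_num) hmp hmin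
    have h3 : 2 / mm η σ p ≤ 18 * |Phi ι₁ ι₂ (p+η+σ) η σ| := by
      have := inv_mm_le_phi h₁ h₂ h
      rw [div_le_iff₀ hmp] at this ⊢
      nlinarith [abs_nonneg (Phi ι₁ ι₂ (p+η+σ) η σ)]
    linarith
  · have h78 := misaligned_phase h₁ h₂ (InO_p h).le hmis
    have b1 : |(p+η+σ)/jb (p+η+σ)| ≤ 1 := by
      rw [abs_div, abs_of_pos (jb_pos _)]
      exact (div_le_one (jb_pos _)).mpr (abs_le_jb _)
    have b2 : |η/jb η| ≤ 1 := by
      rw [abs_div, abs_of_pos (jb_pos _)]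
      exact (div_le_one (jb_pos _)).mpr (abs_le_jb _)
    have hι : |ι₁| = 1 := by rcases h₁ with h'|h' <;> subst h' <;> simp
    have := abs_sub ((p+η+σ)/jb (p+η+σ)) (ι₁ * (η/jb η))
    rw [abs_mul, hι, one_mul] at this
    linarith

lemma Phi_swap (ι₁ ι₂ ξ η σ : ℝ) : Phi ι₁ ι₂ ξ η σ = Phi ι₂ ι₁ ξ σ η := by
  rw [Phi, Phi]; ring

lemma InO_swap {η σ p : ℝ} (h : InO η σ p) : InO σ η p := by
  rw [InO] at h ⊢
  rw [Rf, mul_comm (jb σ) (jb η), add_comm (jb σ) (jb η)]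
  exact h

lemma mm_swap (η σ p : ℝ) : mm σ η p = mm η σ p := by
  rw [mm, mm, show p+σ+η = p+η+σ from by ring, min_comm (jb σ) (jb η)]

lemma dP_swap10 (ι₁ ι₂ η σ p : ℝ) :
    dP ι₁ ι₂ (0,1,0) η σ p = dP ι₂ ι₁ (1,0,0) σ η p := by
  simp [dP, show p+σ+η = p+η+σ from by ring]

lemma dP_zero_swap (ι₁ ι₂ η σ p : ℝ) :
    dP ι₁ ι₂ (0,0,0) η σ p = dP ι₂ ι₁ (0,0,0) σ η p := by
  simp [dP, show p+σ+η = p+η+σ from by ring]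
  ring

lemma fo_sigma {ι₁ ι₂ : ℝ} (h₁ : ι₁ = 1 ∨ ι₁ = -1) (h₂ : ι₂ = 1 ∨ ι₂ = -1)
    {η σ p : ℝ} (h : InO η σ p) :
    |dP ι₁ ι₂ (0,1,0) η σ p| ≤ 18 * |dP ι₁ ι₂ (0,0,0) η σ p| := by
  rw [dP_swap10, dP_zero_swap]
  exact fo_eta h₂ h₁ (InO_swap h)

lemma jb_iter_bound_const (k : ℕ) : ∃ C : ℝ, 0 < C ∧
    ∀ x, |iteratedDeriv (k+1) jb x| ≤ C := by
  obtain ⟨C, hC, hb⟩ := jb_iter_bound k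
  refine ⟨C, hC, fun x => le_trans (hb x) ?_⟩
  have h1 : (1:ℝ) ≤ jb x ^ k := one_le_pow₀ (one_le_jb x)
  rw [div_le_iff₀ (by positivity)]
  nlinarith

lemma jb_iter_bound_decay (k : ℕ) : ∃ C : ℝ, 0 < C ∧
    ∀ x, |iteratedDeriv (k+2) jb x| ≤ C / jb x := by
  obtain ⟨C, hC, hb⟩ := jb_iter_bound (k+1)
  refine ⟨C, hC, fun x => le_trans (hb x) ?_⟩
  apply div_le_div_of_nonneg_left hC.le (jb_pos x)
  exact le_self_pow₀ (one_le_jb x) (by omega)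

lemma factor_bound (ι₁ ι₂ : ℝ) (h₁ : ι₁ = 1 ∨ ι₁ = -1) (h₂ : ι₂ = 1 ∨ ι₂ = -1)
    (α : ℕ × ℕ × ℕ) (hα : α ≠ (0,0,0)) :
    ∃ K : ℝ, 0 < K ∧ ∀ η σ p, InO η σ p →
      |dP ι₁ ι₂ α η σ p| ≤ K * mm η σ p ^ α.2.2 * |dP ι₁ ι₂ (0,0,0) η σ p| := by
  obtain ⟨a, b, c⟩ := α
  simp only at hα ⊢
  rcases c with _ | c'
  · -- c = 0
    rcases Nat.eq_zero_or_pos a with ha | ha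
    · subst ha
      rcases Nat.eq_zero_or_pos b with hb | hb
      · exfalso; exact hα (by simp [hb])
      rcases Nat.lt_or_ge b 2 with hb2 | hb2
      · -- b = 1
        have hb1 : b = 1 := by omega
        subst hb1
        exact ⟨18, by norm_num, fun η σ p h => by
          simpa using fo_sigma h₁ h₂ h⟩
      · -- b ≥ 2
        obtain ⟨k, hk⟩ : ∃ k, b = k + 2 := ⟨b - 2, by omega⟩
        subst hk
        obtain ⟨C, hC, hb'⟩ := jb_iter_bound_decay k
        refine ⟨18 * C, by positivity, fun η σ p h => ?_⟩
        have hval : dP ι₁ ι₂ (0, k+2, 0) η σ p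
            = iteratedDeriv (k+2) jb (p+η+σ) - ι₂ * iteratedDeriv (k+2) jb σ := by
          simp [dP]
        rw [hval]
        have hι : |ι₂| = 1 := by rcases h₂ with h'|h' <;> subst h' <;> simp
        have e1 := hb' (p+η+σ); have e2 := hb' σ
        have d1 : C / jb (p+η+σ) ≤ C / mm η σ p :=
          div_le_div_of_nonneg_left hC.le (mm_pos η σ p) (mm_le_xi η σ p)
        have d2 : C / jb σ ≤ C / mm η σ p :=
          div_le_div_of_nonneg_left hC.le (mm_pos η σ p) (mm_le_sigma η σ p)
        have habs : |iteratedDeriv (k+2) jb (p+η+σ) - ι₂ * iteratedDeriv (k+2) jb σ|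
            ≤ 2 * (C / mm η σ p) := by
          have := abs_sub (iteratedDeriv (k+2) jb (p+η+σ)) (ι₂ * iteratedDeriv (k+2) jb σ)
          rw [abs_mul, hι, one_mul] at this
          linarith
        have hfin := inv_mm_le_phi h₁ h₂ h
        rw [dP_zero, pow_zero, mul_one]
        have hmp := mm_pos η σ p
        rw [div_le_iff₀ hmp] at hfin
        calc |iteratedDeriv (k+2) jb (p+η+σ) - ι₂ * iteratedDeriv (k+2) jb σ|
            ≤ 2 * (C / mm η σ p) := habs
          _ ≤ 18 * C * |Phi ι₁ ι₂ (p+η+σ) η σ| := by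
              rw [show 2 * (C / mm η σ p) = (2 * C) / mm η σ p from by ring,
                div_le_iff₀ hmp]
              nlinarith [abs_nonneg (Phi ι₁ ι₂ (p+η+σ) η σ)]
    · rcases Nat.eq_zero_or_pos b with hb | hb
      · subst hb
        rcases Nat.lt_or_ge a 2 with ha2 | ha2
        · have ha1 : a = 1 := by omega
          subst ha1
          exact ⟨18, by norm_num, fun η σ p h => by
            simpa using fo_eta h₁ h₂ h⟩
        · obtain ⟨k, hk⟩ : ∃ k, a = k + 2 := ⟨a - 2, by omega⟩
          subst hk
          obtain ⟨C, hC, hb'⟩ := jb_iter_bound_decay k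
          refine ⟨18 * C, by positivity, fun η σ p h => ?_⟩
          have hval : dP ι₁ ι₂ (k+2, 0, 0) η σ p
              = iteratedDeriv (k+2) jb (p+η+σ) - ι₁ * iteratedDeriv (k+2) jb η := by
            simp [dP]
          rw [hval]
          have hι : |ι₁| = 1 := by rcases h₁ with h'|h' <;> subst h' <;> simp
          have e1 := hb' (p+η+σ); have e2 := hb' η
          have d1 : C / jb (p+η+σ) ≤ C / mm η σ p :=
            div_le_div_of_nonneg_left hC.le (mm_pos η σ p) (mm_le_xi η σ p)
          have d2 : C / jb η ≤ C / mm η σ p :=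
            div_le_div_of_nonneg_left hC.le (mm_pos η σ p) (mm_le_eta η σ p)
          have habs : |iteratedDeriv (k+2) jb (p+η+σ) - ι₁ * iteratedDeriv (k+2) jb η|
              ≤ 2 * (C / mm η σ p) := by
            have := abs_sub (iteratedDeriv (k+2) jb (p+η+σ)) (ι₁ * iteratedDeriv (k+2) jb η)
            rw [abs_mul, hι, one_mul] at this
            linarith
          have hfin := inv_mm_le_phi h₁ h₂ h
          rw [dP_zero, pow_zero, mul_one]
          have hmp := mm_pos η σ p
          rw [div_le_iff₀ hmp] at hfin
          calc |iteratedDeriv (k+2) jb (p+η+σ) - ι₁ * iteratedDeriv (k+2) jb η|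
              ≤ 2 * (C / mm η σ p) := habs
            _ ≤ 18 * C * |Phi ι₁ ι₂ (p+η+σ) η σ| := by
                rw [show 2 * (C / mm η σ p) = (2 * C) / mm η σ p from by ring,
                  div_le_iff₀ hmp]
                nlinarith [abs_nonneg (Phi ι₁ ι₂ (p+η+σ) η σ)]
      · -- a ≥ 1, b ≥ 1, c = 0
        obtain ⟨a', ha'⟩ : ∃ a', a = a' + 1 := ⟨a - 1, by omega⟩
        obtain ⟨b', hb'⟩ : ∃ b', b = b' + 1 := ⟨b - 1, by omega⟩
        subst ha'; subst hb'
        obtain ⟨C, hC, hbd⟩ := jb_iter_bound_decay (a' + b')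
        refine ⟨9 * C, by positivity, fun η σ p h => ?_⟩
        have hval : dP ι₁ ι₂ (a'+1, b'+1, 0) η σ p
            = iteratedDeriv (a'+1+(b'+1)+0) jb (p+η+σ) := by
          simp [dP]
        rw [hval, show a'+1+(b'+1)+0 = (a'+b')+2 from by omega]
        have e1 := hbd (p+η+σ)
        have d1 : C / jb (p+η+σ) ≤ C / mm η σ p :=
          div_le_div_of_nonneg_left hC.le (mm_pos η σ p) (mm_le_xi η σ p)
        have hfin := inv_mm_le_phi h₁ h₂ h
        have hmp := mm_pos η σ p
        rw [div_le_iff₀ hmp] at hfin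
        rw [dP_zero, pow_zero, mul_one]
        calc |iteratedDeriv (a'+b'+2) jb (p+η+σ)| ≤ C / mm η σ p := le_trans e1 d1
          _ ≤ 9 * C * |Phi ι₁ ι₂ (p+η+σ) η σ| := by
              rw [div_le_iff₀ hmp]
              nlinarith [abs_nonneg (Phi ι₁ ι₂ (p+η+σ) η σ)]
  · -- c = c' + 1 ≥ 1
    obtain ⟨C, hC, hbd⟩ := jb_iter_bound_const (a + b + c')
    refine ⟨9 * C, by positivity, fun η σ p h => ?_⟩
    have hval : dP ι₁ ι₂ (a, b, c'+1) η σ p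
        = iteratedDeriv (a+b+(c'+1)) jb (p+η+σ) := by
      simp [dP]
    rw [hval, show a+b+(c'+1) = (a+b+c')+1 from by omega]
    rw [dP_zero]
    have hmp := mm_pos η σ p
    have hmm1 := one_le_mm η σ p
    have hPhi := phi_lower h₁ h₂ h
    have hpow : (1:ℝ) ≤ mm η σ p ^ c' := one_le_pow₀ hmm1
    have hkey : 1/9 ≤ mm η σ p ^ (c'+1) * |Phi ι₁ ι₂ (p+η+σ) η σ| := by
      have h9 : 1 / (9 * mm η σ p) * mm η σ p = 1/9 := by
        field_simp
      have step : 1/(9 * mm η σ p) * mm η σ p ≤ |Phi ι₁ ι₂ (p+η+σ) η σ| * mm η σ p :=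
        mul_le_mul_of_nonneg_right hPhi hmp.le
      rw [h9] at step
      calc (1:ℝ)/9 ≤ |Phi ι₁ ι₂ (p+η+σ) η σ| * mm η σ p := step
        _ ≤ mm η σ p ^ (c'+1) * |Phi ι₁ ι₂ (p+η+σ) η σ| := by
            rw [pow_succ]
            nlinarith [abs_nonneg (Phi ι₁ ι₂ (p+η+σ) η σ)]
    calc |iteratedDeriv (a+b+c'+1) jb (p+η+σ)| ≤ C := hbd _
      _ ≤ 9 * C * (mm η σ p ^ (c'+1) * |Phi ι₁ ι₂ (p+η+σ) η σ|) := by nlinarith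
      _ = 9 * C * mm η σ p ^ (c'+1) * |Phi ι₁ ι₂ (p+η+σ) η σ| := by ring

abbrev Idx := ℕ × ℕ × ℕ

def addIdx (α e : Idx) : Idx := (α.1+e.1, α.2.1+e.2.1, α.2.2+e.2.2)

lemma addIdx_ne {α : Idx} (e : Idx) (h : α ≠ (0,0,0)) : addIdx α e ≠ (0,0,0) := by
  simp only [addIdx, ne_eq, Prod.ext_iff, Prod.mk.injEq] at *
  omega

lemma idx_ne_of_e {e : Idx} (he : e ≠ (0,0,0)) : addIdx (0,0,0) e ≠ (0,0,0) := by
  simpa [addIdx] using he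

noncomputable def termf (ι₁ ι₂ : ℝ) : List Idx → ℝ → ℝ → ℝ → ℝ
  | [] => fun η σ p => (dP ι₁ ι₂ (0,0,0) η σ p)⁻¹
  | (α :: L) => fun η σ p =>
      dP ι₁ ι₂ α η σ p * termf ι₁ ι₂ L η σ p * (dP ι₁ ι₂ (0,0,0) η σ p)⁻¹

def wt (L : List Idx) : ℕ := (L.map (fun α => α.2.2)).sum

def okL (L : List Idx) : Prop := ∀ α ∈ L, α ≠ (0,0,0)

noncomputable def combSum (ι₁ ι₂ : ℝ) (T : List (ℝ × List Idx)) (η σ p : ℝ) : ℝ :=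
  (T.map (fun rl => rl.1 * termf ι₁ ι₂ rl.2 η σ p)).sum

lemma combSum_nil (ι₁ ι₂ η σ p : ℝ) : combSum ι₁ ι₂ [] η σ p = 0 := rfl
lemma combSum_cons (ι₁ ι₂ η σ p : ℝ) (rl : ℝ × List Idx) (T : List (ℝ × List Idx)) :
    combSum ι₁ ι₂ (rl :: T) η σ p
      = rl.1 * termf ι₁ ι₂ rl.2 η σ p + combSum ι₁ ι₂ T η σ p := by
  simp [combSum]
lemma combSum_append (ι₁ ι₂ η σ p : ℝ) (T T' : List (ℝ × List Idx)) :
    combSum ι₁ ι₂ (T ++ T') η σ p = combSum ι₁ ι₂ T η σ p + combSum ι₁ ι₂ T' η σ p := by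
  simp [combSum]
lemma combSum_scale (ι₁ ι₂ η σ p : ℝ) (r : ℝ) (T : List (ℝ × List Idx)) :
    combSum ι₁ ι₂ (T.map (fun sl => (r * sl.1, sl.2))) η σ p
      = r * combSum ι₁ ι₂ T η σ p := by
  induction T with
  | nil => simp [combSum]
  | cons rl T ih =>
    rw [List.map_cons, combSum_cons, combSum_cons, ih]
    ring
lemma combSum_consIdx (ι₁ ι₂ η σ p : ℝ) (α : Idx) (T : List (ℝ × List Idx)) :
    combSum ι₁ ι₂ (T.map (fun sl => (sl.1, α :: sl.2))) η σ p
      = dP ι₁ ι₂ α η σ p * combSum ι₁ ι₂ T η σ p * (dP ι₁ ι₂ (0,0,0) η σ p)⁻¹ := by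
  induction T with
  | nil => simp [combSum]
  | cons rl T ih =>
    rw [List.map_cons, combSum_cons, combSum_cons, ih]
    simp only [termf]
    ring

lemma term_deriv (ι₁ ι₂ : ℝ) (e : Idx) (he : e ≠ (0,0,0)) (L : List Idx) :
    ∃ T : List (ℝ × List Idx),
      (∀ rl ∈ T, wt rl.2 = wt L + e.2.2 ∧ (okL L → okL rl.2)) ∧
      ∀ (g h k : ℝ → ℝ) (x₀ : ℝ),
        (∀ α : Idx, HasDerivAt (fun t => dP ι₁ ι₂ α (g t) (h t) (k t))
          (dP ι₁ ι₂ (addIdx α e) (g x₀) (h x₀) (k x₀)) x₀) →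
        dP ι₁ ι₂ (0,0,0) (g x₀) (h x₀) (k x₀) ≠ 0 →
        HasDerivAt (fun t => termf ι₁ ι₂ L (g t) (h t) (k t))
          (combSum ι₁ ι₂ T (g x₀) (h x₀) (k x₀)) x₀ := by
  induction L with
  | nil =>
    refine ⟨[(-1, [e])], ?_, ?_⟩
    · intro rl hrl
      simp only [List.mem_singleton] at hrl
      subst hrl
      constructor
      · simp [wt]
      · intro _
        intro α hα
        simp only [List.mem_singleton] at hα
        subst hα; exact he
    · intro g h k x₀ hfam hne
      have h0 := (hfam (0,0,0)).inv hne
      refine h0.congr_deriv ?_; symm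
      simp only [combSum_cons, combSum_nil, termf]
      have : addIdx (0,0,0) e = e := by simp [addIdx]
      rw [this]
      field_simp
      ring
  | cons α L ih =>
    obtain ⟨T', hT', hder⟩ := ih
    refine ⟨(1, addIdx α e :: L) :: (T'.map (fun sl => (sl.1, α :: sl.2)))
        ++ [(-1, α :: e :: L)], ?_, ?_⟩
    · intro rl hrl
      rcases List.mem_cons.mp hrl with hrl | hrl'
      · subst hrl
        constructor
        · simp [wt, addIdx]; omega
        · intro hok
          intro β hβ
          rcases List.mem_cons.mp hβ with hβ | hβ
          · subst hβ; exact addIdx_ne e (hok α (by simp))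
          · exact hok β (List.mem_cons_of_mem _ hβ)
      rcases List.mem_append.mp hrl' with hrl | hrl
      · obtain ⟨sl, hsl, hrl⟩ := List.mem_map.mp hrl
        obtain ⟨hw, hko⟩ := hT' sl hsl
        subst hrl
        constructor
        · simp only [wt, List.map_cons, List.sum_cons] at *
          omega
        · intro hok
          intro β hβ
          rcases List.mem_cons.mp hβ with hβ | hβ
          · rw [hβ]; exact hok α (by simp)
          · exact hko (fun γ hγ => hok γ (List.mem_cons_of_mem _ hγ)) β hβ
      · rw [List.mem_singleton] at hrl
        subst hrl
        constructor
        · simp [wt]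
          omega
        · intro hok
          intro β hβ
          rcases List.mem_cons.mp hβ with hβ | hβ
          · rw [hβ]; exact hok α (by simp)
          · rcases List.mem_cons.mp hβ with hβ | hβ
            · rw [hβ]; exact he
            · exact hok β (List.mem_cons_of_mem _ hβ)
    · intro g h k x₀ hfam hne
      have h1 := hfam α
      have h2 := hder g h k x₀ hfam hne
      have h3 := (hfam (0,0,0)).inv hne
      have hmul := (h1.mul h2).mul h3
      refine hmul.congr_deriv ?_; symm
      simp only [combSum_cons, combSum_append, combSum_consIdx, combSum_nil]
      simp only [termf]
      rw [show addIdx (0,0,0) e = e from by simp [addIdx]]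
      simp only [Pi.inv_apply, Pi.mul_apply]
      have hx := hne
      field_simp
      ring

lemma comb_sum_deriv (ι₁ ι₂ : ℝ) (e : Idx) (he : e ≠ (0,0,0)) (w : ℕ)
    (T : List (ℝ × List Idx)) (hT : ∀ rl ∈ T, wt rl.2 = w ∧ okL rl.2) :
    ∃ T'' : List (ℝ × List Idx),
      (∀ rl ∈ T'', wt rl.2 = w + e.2.2 ∧ okL rl.2) ∧
      ∀ (g h k : ℝ → ℝ) (x₀ : ℝ),
        (∀ α : Idx, HasDerivAt (fun t => dP ι₁ ι₂ α (g t) (h t) (k t))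
          (dP ι₁ ι₂ (addIdx α e) (g x₀) (h x₀) (k x₀)) x₀) →
        dP ι₁ ι₂ (0,0,0) (g x₀) (h x₀) (k x₀) ≠ 0 →
        HasDerivAt (fun t => combSum ι₁ ι₂ T (g t) (h t) (k t))
          (combSum ι₁ ι₂ T'' (g x₀) (h x₀) (k x₀)) x₀ := by
  induction T with
  | nil =>
    refine ⟨[], by simp, fun g h k x₀ hfam hne => ?_⟩
    simp only [combSum_nil]
    exact hasDerivAt_const x₀ 0
  | cons rl T ih =>
    obtain ⟨T₂, hT₂, hder₂⟩ := ih (fun sl hsl => hT sl (List.mem_cons_of_mem _ hsl))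
    obtain ⟨hw, hok⟩ := hT rl (by simp)
    obtain ⟨T₁, hT₁, hder₁⟩ := term_deriv ι₁ ι₂ e he rl.2
    refine ⟨(T₁.map (fun sl => (rl.1 * sl.1, sl.2))) ++ T₂, ?_, ?_⟩
    · intro sl hsl
      rcases List.mem_append.mp hsl with hsl | hsl
      · obtain ⟨ul, hul, hsl⟩ := List.mem_map.mp hsl
        obtain ⟨hw1, hok1⟩ := hT₁ ul hul
        subst hsl
        exact ⟨by simpa [hw] using hw1, hok1 hok⟩
      · exact hT₂ sl hsl
    · intro g h k x₀ hfam hne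
      have h1 := (hder₁ g h k x₀ hfam hne).const_mul rl.1
      have h2 := hder₂ g h k x₀ hfam hne
      have := h1.add h2
      refine this.congr_deriv ?_; symm
      simp only [combSum_cons, combSum_append, combSum_scale]

def Comb (ι₁ ι₂ : ℝ) (w : ℕ) (f : ℝ → ℝ → ℝ → ℝ) : Prop :=
  ∃ T : List (ℝ × List Idx), (∀ rl ∈ T, wt rl.2 = w ∧ okL rl.2) ∧
    ∀ η σ p : ℝ, InO η σ p → f η σ p = combSum ι₁ ι₂ T η σ p

lemma continuous_jb : Continuous jb := by
  apply Real.continuous_sqrt.comp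
  continuity

lemma continuous_pRf (σ p : ℝ) : Continuous (fun t : ℝ => |p| * Rf t σ) := by
  apply Continuous.mul continuous_const
  apply Continuous.div (continuous_jb.mul continuous_const)
    (continuous_jb.add continuous_const)
  intro t
  have := jb_pos t; have := jb_pos σ
  exact (add_pos (jb_pos t) (jb_pos σ)).ne'

lemma continuous_pRf' (η p : ℝ) : Continuous (fun t : ℝ => |p| * Rf η t) := by
  apply Continuous.mul continuous_const
  apply Continuous.div (continuous_const.mul continuous_jb)
    (continuous_const.add continuous_jb)
  intro t
  have := jb_pos t; have := jb_pos η
  exact (add_pos (jb_pos η) (jb_pos t)).ne'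

lemma InO_nhds_eta {η σ p : ℝ} (h : InO η σ p) : ∀ᶠ t in nhds η, InO t σ p := by
  have hopen : IsOpen {t : ℝ | InO t σ p} := by
    have : IsOpen {t : ℝ | |p| * Rf t σ < 1/16} :=
      isOpen_lt (continuous_pRf σ p) continuous_const
    exact this
  exact hopen.mem_nhds h

lemma InO_nhds_sigma {η σ p : ℝ} (h : InO η σ p) : ∀ᶠ t in nhds σ, InO η t p := by
  have hopen : IsOpen {t : ℝ | InO η t p} :=
    isOpen_lt (continuous_pRf' η p) continuous_const
  exact hopen.mem_nhds h

lemma InO_nhds_p {η σ p : ℝ} (h : InO η σ p) : ∀ᶠ t in nhds p, InO η σ t := by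
  have hopen : IsOpen {t : ℝ | InO η σ t} := by
    have hc : Continuous (fun t : ℝ => |t| * Rf η σ) :=
      (continuous_abs).mul continuous_const
    exact isOpen_lt hc continuous_const
  exact hopen.mem_nhds h

lemma comb_deriv_eta {ι₁ ι₂ : ℝ}
    (hΦ : ∀ η σ p : ℝ, InO η σ p → dP ι₁ ι₂ (0,0,0) η σ p ≠ 0)
    {w : ℕ} {f : ℝ → ℝ → ℝ → ℝ} (hf : Comb ι₁ ι₂ w f) :
    Comb ι₁ ι₂ w (fun η σ p => deriv (fun t => f t σ p) η) := by
  obtain ⟨T, hT, hrep⟩ := hf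
  obtain ⟨T'', hT'', hder⟩ := comb_sum_deriv ι₁ ι₂ (1,0,0) (by simp) w T hT
  refine ⟨T'', fun rl hrl => by simpa using hT'' rl hrl, fun η σ p h => ?_⟩
  have hev : (fun t => f t σ p) =ᶠ[nhds η] (fun t => combSum ι₁ ι₂ T t σ p) :=
    (InO_nhds_eta h).mono (fun t ht => hrep t σ p ht)
  show deriv (fun t => f t σ p) η = combSum ι₁ ι₂ T'' η σ p
  rw [hev.deriv_eq]
  have hfam : ∀ α : Idx, HasDerivAt (fun t => dP ι₁ ι₂ α t σ p)
      (dP ι₁ ι₂ (addIdx α (1,0,0)) η σ p) η := by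
    intro ⟨a, b, c⟩
    simpa [addIdx] using hasDerivAt_dP_eta ι₁ ι₂ a b c η σ p
  exact (hder id (fun _ => σ) (fun _ => p) η hfam (hΦ η σ p h)).deriv

lemma comb_deriv_sigma {ι₁ ι₂ : ℝ}
    (hΦ : ∀ η σ p : ℝ, InO η σ p → dP ι₁ ι₂ (0,0,0) η σ p ≠ 0)
    {w : ℕ} {f : ℝ → ℝ → ℝ → ℝ} (hf : Comb ι₁ ι₂ w f) :
    Comb ι₁ ι₂ w (fun η σ p => deriv (fun t => f η t p) σ) := by
  obtain ⟨T, hT, hrep⟩ := hf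
  obtain ⟨T'', hT'', hder⟩ := comb_sum_deriv ι₁ ι₂ (0,1,0) (by simp) w T hT
  refine ⟨T'', fun rl hrl => by simpa using hT'' rl hrl, fun η σ p h => ?_⟩
  have hev : (fun t => f η t p) =ᶠ[nhds σ] (fun t => combSum ι₁ ι₂ T η t p) :=
    (InO_nhds_sigma h).mono (fun t ht => hrep η t p ht)
  show deriv (fun t => f η t p) σ = combSum ι₁ ι₂ T'' η σ p
  rw [hev.deriv_eq]
  have hfam : ∀ α : Idx, HasDerivAt (fun t => dP ι₁ ι₂ α η t p)
      (dP ι₁ ι₂ (addIdx α (0,1,0)) η σ p) σ := by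
    intro ⟨a, b, c⟩
    simpa [addIdx] using hasDerivAt_dP_sigma ι₁ ι₂ a b c η σ p
  exact (hder (fun _ => η) id (fun _ => p) σ hfam (hΦ η σ p h)).deriv

lemma comb_deriv_p {ι₁ ι₂ : ℝ}
    (hΦ : ∀ η σ p : ℝ, InO η σ p → dP ι₁ ι₂ (0,0,0) η σ p ≠ 0)
    {w : ℕ} {f : ℝ → ℝ → ℝ → ℝ} (hf : Comb ι₁ ι₂ w f) :
    Comb ι₁ ι₂ (w+1) (fun η σ p => deriv (fun t => f η σ t) p) := by
  obtain ⟨T, hT, hrep⟩ := hf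
  obtain ⟨T'', hT'', hder⟩ := comb_sum_deriv ι₁ ι₂ (0,0,1) (by simp) w T hT
  refine ⟨T'', fun rl hrl => by simpa using hT'' rl hrl, fun η σ p h => ?_⟩
  have hev : (fun t => f η σ t) =ᶠ[nhds p] (fun t => combSum ι₁ ι₂ T η σ t) :=
    (InO_nhds_p h).mono (fun t ht => hrep η σ t ht)
  show deriv (fun t => f η σ t) p = combSum ι₁ ι₂ T'' η σ p
  rw [hev.deriv_eq]
  have hfam : ∀ α : Idx, HasDerivAt (fun t => dP ι₁ ι₂ α η σ t)
      (dP ι₁ ι₂ (addIdx α (0,0,1)) η σ p) p := by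
    intro ⟨a, b, c⟩
    simpa [addIdx] using hasDerivAt_dP_p ι₁ ι₂ a b c η σ p
  exact (hder (fun _ => η) (fun _ => σ) id p hfam (hΦ η σ p h)).deriv

lemma phi_ne {ι₁ ι₂ : ℝ} (h₁ : ι₁ = 1 ∨ ι₁ = -1) (h₂ : ι₂ = 1 ∨ ι₂ = -1) :
    ∀ η σ p : ℝ, InO η σ p → dP ι₁ ι₂ (0,0,0) η σ p ≠ 0 := by
  intro η σ p h
  rw [dP_zero]
  have h0 := phi_lower h₁ h₂ h
  have hpos : (0:ℝ) < 1 / (9 * mm η σ p) := by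
    have := mm_pos η σ p; positivity
  intro hc
  rw [hc] at h0
  simp at h0
  nlinarith [inv_pos.mpr (mm_pos η σ p)]

lemma phi_inv_bound {ι₁ ι₂ : ℝ} (h₁ : ι₁ = 1 ∨ ι₁ = -1) (h₂ : ι₂ = 1 ∨ ι₂ = -1)
    {η σ p : ℝ} (h : InO η σ p) :
    |(dP ι₁ ι₂ (0,0,0) η σ p)⁻¹| ≤ 9 * mm η σ p := by
  rw [dP_zero, abs_inv]
  have h0 := phi_lower h₁ h₂ h
  have hmp := mm_pos η σ p
  have hpos : (0:ℝ) < 1 / (9 * mm η σ p) := by positivity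
  have hΦpos : 0 < |Phi ι₁ ι₂ (p+η+σ) η σ| := lt_of_lt_of_le hpos h0
  rw [inv_le_comm₀ hΦpos (by positivity), ← one_div]
  exact h0

lemma term_bound {ι₁ ι₂ : ℝ} (h₁ : ι₁ = 1 ∨ ι₁ = -1) (h₂ : ι₂ = 1 ∨ ι₂ = -1)
    (L : List Idx) (hok : okL L) :
    ∃ K : ℝ, 0 < K ∧ ∀ η σ p, InO η σ p →
      |termf ι₁ ι₂ L η σ p| ≤ K * mm η σ p ^ (1 + wt L) := by
  induction L with
  | nil =>
    refine ⟨9, by norm_num, fun η σ p h => ?_⟩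
    have := phi_inv_bound h₁ h₂ h
    simpa [termf, wt] using this
  | cons α L ih =>
    obtain ⟨K₁, hK₁, hb₁⟩ := factor_bound ι₁ ι₂ h₁ h₂ α (hok α (by simp))
    obtain ⟨K₂, hK₂, hb₂⟩ := ih (fun β hβ => hok β (List.mem_cons_of_mem _ hβ))
    refine ⟨K₁ * K₂, by positivity, fun η σ p h => ?_⟩
    have hne := phi_ne h₁ h₂ η σ p h
    have hΦpos : 0 < |dP ι₁ ι₂ (0,0,0) η σ p| := abs_pos.mpr hne
    have hmp := mm_pos η σ p
    have e1 : |termf ι₁ ι₂ (α :: L) η σ p|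
        = |dP ι₁ ι₂ α η σ p| * |termf ι₁ ι₂ L η σ p| * |dP ι₁ ι₂ (0,0,0) η σ p|⁻¹ := by
      simp only [termf, abs_mul, abs_inv]
    rw [e1]
    have step : |dP ι₁ ι₂ α η σ p| * |termf ι₁ ι₂ L η σ p|
        ≤ (K₁ * mm η σ p ^ α.2.2 * |dP ι₁ ι₂ (0,0,0) η σ p|) * (K₂ * mm η σ p ^ (1 + wt L)) :=
      mul_le_mul (hb₁ η σ p h) (hb₂ η σ p h) (abs_nonneg _) (by positivity)
    have step2 := mul_le_mul_of_nonneg_right step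
      (inv_nonneg.mpr (abs_nonneg (dP ι₁ ι₂ (0,0,0) η σ p)))
    refine le_trans step2 (le_of_eq ?_)
    rw [show wt (α :: L) = α.2.2 + wt L from by simp [wt]]
    rw [show (K₁ * mm η σ p ^ α.2.2 * |dP ι₁ ι₂ (0,0,0) η σ p|) * (K₂ * mm η σ p ^ (1 + wt L))
        * |dP ι₁ ι₂ (0,0,0) η σ p|⁻¹
      = K₁ * K₂ * (mm η σ p ^ α.2.2 * mm η σ p ^ (1 + wt L))
        * (|dP ι₁ ι₂ (0,0,0) η σ p| * |dP ι₁ ι₂ (0,0,0) η σ p|⁻¹) from by ring]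
    rw [mul_inv_cancel₀ hΦpos.ne', mul_one, ← pow_add,
      show α.2.2 + (1 + wt L) = 1 + (α.2.2 + wt L) from by omega]

lemma combSum_bound {ι₁ ι₂ : ℝ} (h₁ : ι₁ = 1 ∨ ι₁ = -1) (h₂ : ι₂ = 1 ∨ ι₂ = -1)
    (w : ℕ) (T : List (ℝ × List Idx)) (hT : ∀ rl ∈ T, wt rl.2 = w ∧ okL rl.2) :
    ∃ C : ℝ, 0 < C ∧ ∀ η σ p, InO η σ p →
      |combSum ι₁ ι₂ T η σ p| ≤ C * mm η σ p ^ (1 + w) := by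
  induction T with
  | nil =>
    refine ⟨1, by norm_num, fun η σ p h => ?_⟩
    have := mm_pos η σ p
    have h1 : (0:ℝ) < mm η σ p ^ (1+w) := by positivity
    simp [combSum_nil]
    positivity
  | cons rl T ih =>
    obtain ⟨hw, hok⟩ := hT rl (by simp)
    obtain ⟨K, hK, hb⟩ := term_bound h₁ h₂ rl.2 hok
    obtain ⟨C, hC, hb'⟩ := ih (fun sl hsl => hT sl (List.mem_cons_of_mem _ hsl))
    refine ⟨|rl.1| * K + C, by positivity, fun η σ p h => ?_⟩
    rw [combSum_cons]
    have hbb := hb η σ p h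
    rw [hw] at hbb
    calc |rl.1 * termf ι₁ ι₂ rl.2 η σ p + combSum ι₁ ι₂ T η σ p|
        ≤ |rl.1 * termf ι₁ ι₂ rl.2 η σ p| + |combSum ι₁ ι₂ T η σ p| := abs_add_le _ _
      _ ≤ |rl.1| * (K * mm η σ p ^ (1+w)) + C * mm η σ p ^ (1+w) := by
          rw [abs_mul]
          exact add_le_add (mul_le_mul_of_nonneg_left hbb (abs_nonneg _)) (hb' η σ p h)
      _ = (|rl.1| * K + C) * mm η σ p ^ (1+w) := by ring

lemma comb_base (ι₁ ι₂ : ℝ) :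
    Comb ι₁ ι₂ 0 (fun η σ p => (Phi ι₁ ι₂ (p+η+σ) η σ)⁻¹) := by
  refine ⟨[(1, [])], ?_, fun η σ p _ => ?_⟩
  · intro rl hrl
    simp only [List.mem_singleton] at hrl
    subst hrl
    exact ⟨by simp [wt], fun α hα => absurd hα List.not_mem_nil⟩
  · simp [combSum, termf]
    exact (dP_zero ι₁ ι₂ η σ p).symm

lemma comb_F1 {ι₁ ι₂ : ℝ} (h₁ : ι₁ = 1 ∨ ι₁ = -1) (h₂ : ι₂ = 1 ∨ ι₂ = -1) (c : ℕ) :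
    Comb ι₁ ι₂ c (fun η σ p =>
      iteratedDeriv c (fun p' => (Phi ι₁ ι₂ (p'+η+σ) η σ)⁻¹) p) := by
  induction c with
  | zero => simpa [iteratedDeriv_zero] using comb_base ι₁ ι₂
  | succ c ih =>
    have h := comb_deriv_p (phi_ne h₁ h₂) ih
    have heq : (fun η σ p => iteratedDeriv (c+1) (fun p' => (Phi ι₁ ι₂ (p'+η+σ) η σ)⁻¹) p)
        = (fun η σ p => deriv (fun t =>
            iteratedDeriv c (fun p' => (Phi ι₁ ι₂ (p'+η+σ) η σ)⁻¹) t) p) := by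
      funext η σ p
      rw [iteratedDeriv_succ]
    rw [heq]
    exact h

lemma comb_F2 {ι₁ ι₂ : ℝ} (h₁ : ι₁ = 1 ∨ ι₁ = -1) (h₂ : ι₂ = 1 ∨ ι₂ = -1) (b c : ℕ) :
    Comb ι₁ ι₂ c (fun η σ p =>
      iteratedDeriv b (fun σ' =>
        iteratedDeriv c (fun p' => (Phi ι₁ ι₂ (p'+η+σ') η σ')⁻¹) p) σ) := by
  induction b with
  | zero => simpa [iteratedDeriv_zero] using comb_F1 h₁ h₂ c
  | succ b ih =>
    have h := comb_deriv_sigma (phi_ne h₁ h₂) ih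
    have heq : (fun η σ p => iteratedDeriv (b+1) (fun σ' =>
          iteratedDeriv c (fun p' => (Phi ι₁ ι₂ (p'+η+σ') η σ')⁻¹) p) σ)
        = (fun η σ p => deriv (fun t => iteratedDeriv b (fun σ' =>
          iteratedDeriv c (fun p' => (Phi ι₁ ι₂ (p'+η+σ') η σ')⁻¹) p) t) σ) := by
      funext η σ p
      rw [iteratedDeriv_succ]
    rw [heq]
    exact h

lemma comb_F3 {ι₁ ι₂ : ℝ} (h₁ : ι₁ = 1 ∨ ι₁ = -1) (h₂ : ι₂ = 1 ∨ ι₂ = -1) (a b c : ℕ) :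
    Comb ι₁ ι₂ c (fun η σ p =>
      iteratedDeriv a (fun η' =>
        iteratedDeriv b (fun σ' =>
          iteratedDeriv c (fun p' => (Phi ι₁ ι₂ (p'+η'+σ') η' σ')⁻¹) p) σ) η) := by
  induction a with
  | zero => simpa [iteratedDeriv_zero] using comb_F2 h₁ h₂ b c
  | succ a ih =>
    have h := comb_deriv_eta (phi_ne h₁ h₂) ih
    have heq : (fun η σ p => iteratedDeriv (a+1) (fun η' =>
          iteratedDeriv b (fun σ' =>
            iteratedDeriv c (fun p' => (Phi ι₁ ι₂ (p'+η'+σ') η' σ')⁻¹) p) σ) η)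
        = (fun η σ p => deriv (fun t => iteratedDeriv a (fun η' =>
          iteratedDeriv b (fun σ' =>
            iteratedDeriv c (fun p' => (Phi ι₁ ι₂ (p'+η'+σ') η' σ')⁻¹) p) σ) t) η) := by
      funext η σ p
      rw [iteratedDeriv_succ]
    rw [heq]
    exact h

lemma Rf_pos (η σ : ℝ) : 0 < Rf η σ := by
  rw [Rf]
  have := jb_pos η; have := jb_pos σ
  positivity


/-- Derivative bounds for the reciprocal of the Klein–Gordon phase near the set
`ξ = η + σ` (Lemma 6.2 (iii) in the paper):
`|∂_η^a ∂_σ^b ∂_p^c Φ_{ι₁ι₂}(p+η+σ,η,σ)⁻¹| ≲ min(⟨p+η+σ⟩,⟨η⟩,⟨σ⟩)^{1+c}`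
for `|p| ≤ κ/R(η,σ)`. -/
theorem derivative_bounds_reciprocal_phase (a b c : ℕ) (ι₁ ι₂ : ℝ)
    (h₁ : ι₁ = 1 ∨ ι₁ = -1) (h₂ : ι₂ = 1 ∨ ι₂ = -1) :
    ∃ κ C : ℝ, 0 < κ ∧ 0 < C ∧
      ∀ η σ p : ℝ, |p| ≤ κ / Rf η σ →
        |DrecPhi ι₁ ι₂ a b c η σ p| ≤
          C * (min (jb (p + η + σ)) (min (jb η) (jb σ))) ^ (1 + c) := by
  obtain ⟨T, hT, hrep⟩ := comb_F3 h₁ h₂ a b c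
  obtain ⟨C, hC, hbd⟩ := combSum_bound h₁ h₂ c T hT
  refine ⟨1/32, C, by norm_num, hC, fun η σ p hp => ?_⟩
  have hIn : InO η σ p := by
    rw [InO]
    have hRf := Rf_pos η σ
    rw [le_div_iff₀ hRf] at hp
    linarith
  have heq : DrecPhi ι₁ ι₂ a b c η σ p = combSum ι₁ ι₂ T η σ p := hrep η σ p hIn
  rw [heq]
  exact hbd η σ p hIn
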